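/- (Fletcher–Reeves, standard Wolfe) Let 0 ≤ δ < 1 and assume Assumptions A1 and A2 hold for x⁰. Consider the conjugate gradient iteration with the Fletcher–Reeves bound |β_k| ≤ δ·β_k^{FR}, where β_k^{FR} := ψ_{x^k}(v(x^k)) / ψ_{x^{k−1}}(v(x^{k−1})) for k ≥ 1. If there exists c > 0 such that ψ_{x^k}(d^k) ≤ c·ψ_{x^k}(v(x^k)) for all k ≥ 0 (sufficient descent), and each t_k satisfies the standard Wolfe conditions at x^k along d^k, then liminf_{k→∞} ‖v(x^k)‖ = 0. -/

import Mathlib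

open scoped BigOperators

noncomputable def pd (n : ℕ) (F : EuclideanSpace ℝ (Fin n) → ℝ)
    (x : EuclideanSpace ℝ (Fin n)) (j : Fin n) : ℝ :=
  fderiv ℝ F x (EuclideanSpace.single j (1 : ℝ))

noncomputable def glo (n : ℕ) (F H : EuclideanSpace ℝ (Fin n) → ℝ)
    (x : EuclideanSpace ℝ (Fin n)) (j : Fin n) : ℝ :=
  min (pd n F x j) (pd n H x j)

noncomputable def ghi (n : ℕ) (F H : EuclideanSpace ℝ (Fin n) → ℝ)
    (x : EuclideanSpace ℝ (Fin n)) (j : Fin n) : ℝ :=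
  max (pd n F x j) (pd n H x j)

noncomputable def gloVec (n : ℕ) (F H : EuclideanSpace ℝ (Fin n) → ℝ)
    (x : EuclideanSpace ℝ (Fin n)) : EuclideanSpace ℝ (Fin n) :=
  WithLp.toLp 2 (fun j => glo n F H x j)

noncomputable def ghiVec (n : ℕ) (F H : EuclideanSpace ℝ (Fin n) → ℝ)
    (x : EuclideanSpace ℝ (Fin n)) : EuclideanSpace ℝ (Fin n) :=
  WithLp.toLp 2 (fun j => ghi n F H x j)

noncomputable def psi (m n : ℕ) (Gl Gu : Fin m → EuclideanSpace ℝ (Fin n) → ℝ)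
    (x v : EuclideanSpace ℝ (Fin n)) : ℝ :=
  ⨆ i : Fin m, (1 / 2 : ℝ) *
    ((∑ j : Fin n, (glo n (Gl i) (Gu i) x j + ghi n (Gl i) (Gu i) x j) * v j) +
     (∑ j : Fin n, (ghi n (Gl i) (Gu i) x j - glo n (Gl i) (Gu i) x j) * |v j|))

def LevelSet (m n : ℕ) (Gl Gu : Fin m → EuclideanSpace ℝ (Fin n) → ℝ)
    (x0 : EuclideanSpace ℝ (Fin n)) : Set (EuclideanSpace ℝ (Fin n)) :=
  {x | ∀ i : Fin m, Gl i x ≤ Gl i x0 ∧ Gu i x ≤ Gu i x0}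

def StdWolfe (m n : ℕ) (Gl Gu : Fin m → EuclideanSpace ℝ (Fin n) → ℝ)
    (ρ σ : ℝ) (x d : EuclideanSpace ℝ (Fin n)) (t : ℝ) : Prop :=
  (∀ i : Fin m,
      Gl i (x + t • d) ≤ Gl i x + ρ * t * psi m n Gl Gu x d ∧
      Gu i (x + t • d) ≤ Gu i x + ρ * t * psi m n Gl Gu x d) ∧
  σ * psi m n Gl Gu x d ≤ psi m n Gl Gu (x + t • d) d

def StrongWolfe (m n : ℕ) (Gl Gu : Fin m → EuclideanSpace ℝ (Fin n) → ℝ)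
    (ρ σ : ℝ) (x d : EuclideanSpace ℝ (Fin n)) (t : ℝ) : Prop :=
  (∀ i : Fin m,
      Gl i (x + t • d) ≤ Gl i x + ρ * t * psi m n Gl Gu x d ∧
      Gu i (x + t • d) ≤ Gu i x + ρ * t * psi m n Gl Gu x d) ∧
  |psi m n Gl Gu (x + t • d) d| ≤ σ * |psi m n Gl Gu x d|

def AssumptionA1 (m n : ℕ) (Gl Gu : Fin m → EuclideanSpace ℝ (Fin n) → ℝ)
    (x0 : EuclideanSpace ℝ (Fin n)) : Prop :=
  ∀ i : Fin m, ∃ L : ℝ, 0 < L ∧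
    ∀ y ∈ LevelSet m n Gl Gu x0, ∀ z ∈ LevelSet m n Gl Gu x0,
      ‖gloVec n (Gl i) (Gu i) y - gloVec n (Gl i) (Gu i) z‖ ≤ L * ‖y - z‖ ∧
      ‖ghiVec n (Gl i) (Gu i) y - ghiVec n (Gl i) (Gu i) z‖ ≤ L * ‖y - z‖

def AssumptionA2 (m n : ℕ) (Gl Gu : Fin m → EuclideanSpace ℝ (Fin n) → ℝ)
    (x0 : EuclideanSpace ℝ (Fin n)) : Prop :=
  ∀ y : ℕ → EuclideanSpace ℝ (Fin n),
    (∀ k, y k ∈ LevelSet m n Gl Gu x0) →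
    (∀ (i : Fin m) (k : ℕ), Gl i (y (k+1)) ≤ Gl i (y k) ∧ Gu i (y (k+1)) ≤ Gu i (y k)) →
    ∀ i : Fin m, (∃ Cl : ℝ, ∀ k, Cl ≤ Gl i (y k)) ∧ (∃ Cu : ℝ, ∀ k, Cu ≤ Gu i (y k))

open scoped BigOperators

lemma cs_sum (n : ℕ) (u dv : EuclideanSpace ℝ (Fin n)) :
    |∑ j : Fin n, u j * dv j| ≤ ‖u‖ * ‖dv‖ := by
  have h := abs_real_inner_le_norm u dv
  simpa [PiLp.inner_apply, RCLike.inner_apply, mul_comm] using h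

noncomputable def absVec (n : ℕ) (dv : EuclideanSpace ℝ (Fin n)) :
    EuclideanSpace ℝ (Fin n) := WithLp.toLp 2 (fun j => |dv j|)

lemma absVec_apply (n : ℕ) (dv : EuclideanSpace ℝ (Fin n)) (j : Fin n) :
    absVec n dv j = |dv j| := rfl

lemma norm_absvec (n : ℕ) (dv : EuclideanSpace ℝ (Fin n)) :
    ‖absVec n dv‖ = ‖dv‖ := by
  rw [EuclideanSpace.norm_eq, EuclideanSpace.norm_eq]
  simp [absVec_apply, sq_abs]

lemma psi_zero (m n : ℕ) (hm : 0 < m) (Gl Gu : Fin m → EuclideanSpace ℝ (Fin n) → ℝ)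
    (x : EuclideanSpace ℝ (Fin n)) : psi m n Gl Gu x 0 = 0 := by
  haveI : Nonempty (Fin m) := ⟨⟨0, hm⟩⟩
  have : ∀ i : Fin m, (1 / 2 : ℝ) *
    ((∑ j : Fin n, (glo n (Gl i) (Gu i) x j + ghi n (Gl i) (Gu i) x j) * (0 : EuclideanSpace ℝ (Fin n)) j) +
     (∑ j : Fin n, (ghi n (Gl i) (Gu i) x j - glo n (Gl i) (Gu i) x j) * |(0 : EuclideanSpace ℝ (Fin n)) j|)) = 0 := by
    intro i
    simp
  unfold psi
  simp only [this]
  exact ciSup_const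

lemma psi_smul (m n : ℕ) (hm : 0 < m) (Gl Gu : Fin m → EuclideanSpace ℝ (Fin n) → ℝ)
    (x w : EuclideanSpace ℝ (Fin n)) (c : ℝ) (hc : 0 ≤ c) :
    psi m n Gl Gu x (c • w) = c * psi m n Gl Gu x w := by
  haveI : Nonempty (Fin m) := ⟨⟨0, hm⟩⟩
  unfold psi
  rw [Real.mul_iSup_of_nonneg hc]
  congr 1
  funext i
  have habs : ∀ j : Fin n, |(c • w : EuclideanSpace ℝ (Fin n)) j| = c * |w j| := by
    intro j
    have : (c • w : EuclideanSpace ℝ (Fin n)) j = c * w j := rfl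
    rw [this, abs_mul, abs_of_nonneg hc]
  have happ : ∀ j : Fin n, (c • w : EuclideanSpace ℝ (Fin n)) j = c * w j := fun j => rfl
  simp only [habs, happ]
  have h1 : ∑ j : Fin n, (glo n (Gl i) (Gu i) x j + ghi n (Gl i) (Gu i) x j) * (c * w j)
      = c * ∑ j : Fin n, (glo n (Gl i) (Gu i) x j + ghi n (Gl i) (Gu i) x j) * w j := by
    rw [Finset.mul_sum]; apply Finset.sum_congr rfl; intros; ring
  have h2 : ∑ j : Fin n, (ghi n (Gl i) (Gu i) x j - glo n (Gl i) (Gu i) x j) * |c * w j|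
      = c * ∑ j : Fin n, (ghi n (Gl i) (Gu i) x j - glo n (Gl i) (Gu i) x j) * |w j| := by
    rw [Finset.mul_sum]; apply Finset.sum_congr rfl; intro j _
    rw [abs_mul, abs_of_nonneg hc]; ring
  rw [h1, h2]; ring
lemma psi_v_eq (m n : ℕ) (hm : 0 < m) (Gl Gu : Fin m → EuclideanSpace ℝ (Fin n) → ℝ)
    (vv : EuclideanSpace ℝ (Fin n) → EuclideanSpace ℝ (Fin n))
    (hvmin : ∀ y w : EuclideanSpace ℝ (Fin n),
      psi m n Gl Gu y (vv y) + (1/2) * ‖vv y‖^2 ≤ psi m n Gl Gu y w + (1/2) * ‖w‖^2)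
    (y : EuclideanSpace ℝ (Fin n)) (hy : vv y ≠ 0) :
    psi m n Gl Gu y (vv y) = -‖vv y‖^2 := by
  have hvpos : 0 < ‖vv y‖ := norm_pos_iff.2 hy
  set A := psi m n Gl Gu y (vv y) with hA
  have hBpos : 0 < ‖vv y‖^2 := by positivity
  set B := ‖vv y‖^2 with hBdef
  have h0 : A + (1/2) * B ≤ 0 := by
    have h := hvmin y 0
    rw [psi_zero m n hm Gl Gu y, norm_zero] at h
    calc A + (1/2) * B ≤ 0 + 1/2 * 0 ^ 2 := h
      _ = 0 := by norm_num
  have hAneg : A ≤ 0 := by nlinarith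
  set s : ℝ := -A / B with hs
  have hsnn : 0 ≤ s := div_nonneg (by linarith) hBpos.le
  have hsB : s * B = -A := div_mul_cancel₀ _ (ne_of_gt hBpos)
  have h1 := hvmin y (s • vv y)
  rw [psi_smul m n hm Gl Gu y (vv y) s hsnn, norm_smul, Real.norm_eq_abs,
    abs_of_nonneg hsnn, mul_pow] at h1
  have h1' : A + (1/2) * B ≤ s * A + (1/2) * (s^2 * B) := h1
  have h1B := mul_le_mul_of_nonneg_right h1' hBpos.le
  have hsAB : s * A * B = -(A^2) := by
    rw [mul_comm s A, mul_assoc, hsB]; ring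
  have hsB2 : s^2 * B^2 = A^2 := by
    calc s^2 * B^2 = (s * B)^2 := by ring
      _ = A^2 := by rw [hsB]; ring
  have h2 : (A + B)^2 ≤ 0 := by nlinarith [h1B, hsAB, hsB2]
  have h3 : A + B = 0 := sq_eq_zero_iff.1 (le_antisymm h2 (sq_nonneg _))
  linarith

lemma ciSup_sub_le_of_abs (m : ℕ) (hm : 0 < m) (f g : Fin m → ℝ) (M : ℝ)
    (h : ∀ i, |f i - g i| ≤ M) : (⨆ i, f i) - ⨆ i, g i ≤ M := by
  haveI : Nonempty (Fin m) := ⟨⟨0, hm⟩⟩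
  rw [sub_le_iff_le_add]
  refine ciSup_le fun i => ?_
  have h1 := (abs_sub_le_iff.1 (h i)).1
  have h2 : g i ≤ ⨆ j, g j := le_ciSup (Set.Finite.bddAbove (Set.finite_range g)) i
  linarith

lemma psi_lip (m n : ℕ) (hm : 0 < m) (Gl Gu : Fin m → EuclideanSpace ℝ (Fin n) → ℝ)
    (x0 : EuclideanSpace ℝ (Fin n)) (hA1 : AssumptionA1 m n Gl Gu x0) :
    ∃ L : ℝ, 0 < L ∧ ∀ y ∈ LevelSet m n Gl Gu x0, ∀ z ∈ LevelSet m n Gl Gu x0,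
      ∀ dv : EuclideanSpace ℝ (Fin n),
        |psi m n Gl Gu y dv - psi m n Gl Gu z dv| ≤ L * ‖y - z‖ * ‖dv‖ := by
  haveI : Nonempty (Fin m) := ⟨⟨0, hm⟩⟩
  choose L hLpos hLip using hA1
  have hsumpos : 0 < ∑ i : Fin m, L i :=
    Finset.sum_pos (fun i _ => hLpos i) Finset.univ_nonempty
  refine ⟨2 * ∑ i : Fin m, L i, by linarith, ?_⟩
  intro y hy z hz dv
  have key : ∀ i : Fin m,
      |((1 / 2 : ℝ) *
        ((∑ j : Fin n, (glo n (Gl i) (Gu i) y j + ghi n (Gl i) (Gu i) y j) * dv j) +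
         (∑ j : Fin n, (ghi n (Gl i) (Gu i) y j - glo n (Gl i) (Gu i) y j) * |dv j|))) -
       ((1 / 2 : ℝ) *
        ((∑ j : Fin n, (glo n (Gl i) (Gu i) z j + ghi n (Gl i) (Gu i) z j) * dv j) +
         (∑ j : Fin n, (ghi n (Gl i) (Gu i) z j - glo n (Gl i) (Gu i) z j) * |dv j|)))| ≤
      (2 * ∑ i : Fin m, L i) * ‖y - z‖ * ‖dv‖ := by
    intro i
    set u1 : EuclideanSpace ℝ (Fin n) :=
      (gloVec n (Gl i) (Gu i) y - gloVec n (Gl i) (Gu i) z) +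
      (ghiVec n (Gl i) (Gu i) y - ghiVec n (Gl i) (Gu i) z) with hu1def
    set u2 : EuclideanSpace ℝ (Fin n) :=
      (ghiVec n (Gl i) (Gu i) y - ghiVec n (Gl i) (Gu i) z) -
      (gloVec n (Gl i) (Gu i) y - gloVec n (Gl i) (Gu i) z) with hu2def
    have hu1 : ∀ j, u1 j = (glo n (Gl i) (Gu i) y j + ghi n (Gl i) (Gu i) y j) -
        (glo n (Gl i) (Gu i) z j + ghi n (Gl i) (Gu i) z j) := by
      intro j
      show (gloVec n (Gl i) (Gu i) y j - gloVec n (Gl i) (Gu i) z j) +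
        (ghiVec n (Gl i) (Gu i) y j - ghiVec n (Gl i) (Gu i) z j) = _
      simp only [gloVec, ghiVec, WithLp.ofLp_toLp]; ring
    have hu2 : ∀ j, u2 j = (ghi n (Gl i) (Gu i) y j - glo n (Gl i) (Gu i) y j) -
        (ghi n (Gl i) (Gu i) z j - glo n (Gl i) (Gu i) z j) := by
      intro j
      show (ghiVec n (Gl i) (Gu i) y j - ghiVec n (Gl i) (Gu i) z j) -
        (gloVec n (Gl i) (Gu i) y j - gloVec n (Gl i) (Gu i) z j) = _
      simp only [gloVec, ghiVec, WithLp.ofLp_toLp]; ring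
    have hn1 : ‖u1‖ ≤ 2 * L i * ‖y - z‖ := by
      have h1 := (hLip i y hy z hz).1
      have h2 := (hLip i y hy z hz).2
      calc ‖u1‖ ≤ ‖gloVec n (Gl i) (Gu i) y - gloVec n (Gl i) (Gu i) z‖ +
            ‖ghiVec n (Gl i) (Gu i) y - ghiVec n (Gl i) (Gu i) z‖ := norm_add_le _ _
        _ ≤ 2 * L i * ‖y - z‖ := by linarith
    have hn2 : ‖u2‖ ≤ 2 * L i * ‖y - z‖ := by
      have h1 := (hLip i y hy z hz).1
      have h2 := (hLip i y hy z hz).2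
      calc ‖u2‖ ≤ ‖ghiVec n (Gl i) (Gu i) y - ghiVec n (Gl i) (Gu i) z‖ +
            ‖gloVec n (Gl i) (Gu i) y - gloVec n (Gl i) (Gu i) z‖ := norm_sub_le _ _
        _ ≤ 2 * L i * ‖y - z‖ := by linarith
    have hcs1 : |∑ j : Fin n, u1 j * dv j| ≤ ‖u1‖ * ‖dv‖ := cs_sum n u1 dv
    have hcs2 : abs (∑ j : Fin n, u2 j * |dv j|) ≤ ‖u2‖ * ‖dv‖ := by
      have h := cs_sum n u2 (absVec n dv)
      rw [norm_absvec] at h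
      simpa [absVec_apply] using h
    have hrw : ((1 / 2 : ℝ) *
        ((∑ j : Fin n, (glo n (Gl i) (Gu i) y j + ghi n (Gl i) (Gu i) y j) * dv j) +
         (∑ j : Fin n, (ghi n (Gl i) (Gu i) y j - glo n (Gl i) (Gu i) y j) * |dv j|))) -
       ((1 / 2 : ℝ) *
        ((∑ j : Fin n, (glo n (Gl i) (Gu i) z j + ghi n (Gl i) (Gu i) z j) * dv j) +
         (∑ j : Fin n, (ghi n (Gl i) (Gu i) z j - glo n (Gl i) (Gu i) z j) * |dv j|))) =
        (1/2) * ((∑ j : Fin n, u1 j * dv j) + (∑ j : Fin n, u2 j * |dv j|)) := by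
      have e1 : ∑ j : Fin n, u1 j * dv j =
          (∑ j : Fin n, (glo n (Gl i) (Gu i) y j + ghi n (Gl i) (Gu i) y j) * dv j) -
          ∑ j : Fin n, (glo n (Gl i) (Gu i) z j + ghi n (Gl i) (Gu i) z j) * dv j := by
        rw [← Finset.sum_sub_distrib]
        apply Finset.sum_congr rfl; intro j _; rw [hu1 j]; ring
      have e2 : ∑ j : Fin n, u2 j * |dv j| =
          (∑ j : Fin n, (ghi n (Gl i) (Gu i) y j - glo n (Gl i) (Gu i) y j) * |dv j|) -
          ∑ j : Fin n, (ghi n (Gl i) (Gu i) z j - glo n (Gl i) (Gu i) z j) * |dv j| := by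
        rw [← Finset.sum_sub_distrib]
        apply Finset.sum_congr rfl; intro j _; rw [hu2 j]; ring
      rw [e1, e2]; ring
    rw [hrw]
    have h5 : abs ((1/2 : ℝ) * ((∑ j : Fin n, u1 j * dv j) + (∑ j : Fin n, u2 j * |dv j|))) ≤
        (1/2) * (|∑ j : Fin n, u1 j * dv j| + abs (∑ j : Fin n, u2 j * |dv j|)) := by
      rw [abs_mul]
      have := abs_add_le (∑ j : Fin n, u1 j * dv j) (∑ j : Fin n, u2 j * |dv j|)
      have h12 : |(1/2 : ℝ)| = 1/2 := by norm_num
      rw [h12]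
      linarith
    have hLi : L i ≤ ∑ i : Fin m, L i :=
      Finset.single_le_sum (fun i _ => (hLpos i).le) (Finset.mem_univ i)
    have hnn : 0 ≤ ‖y - z‖ * ‖dv‖ := mul_nonneg (norm_nonneg _) (norm_nonneg _)
    have h6 : ‖u1‖ * ‖dv‖ ≤ 2 * L i * ‖y - z‖ * ‖dv‖ :=
      mul_le_mul_of_nonneg_right hn1 (norm_nonneg _)
    have h7 : ‖u2‖ * ‖dv‖ ≤ 2 * L i * ‖y - z‖ * ‖dv‖ :=
      mul_le_mul_of_nonneg_right hn2 (norm_nonneg _)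
    have h8 : 2 * L i * ‖y - z‖ * ‖dv‖ ≤ 2 * (∑ i : Fin m, L i) * ‖y - z‖ * ‖dv‖ := by
      have : 2 * L i * (‖y - z‖ * ‖dv‖) ≤ 2 * (∑ i : Fin m, L i) * (‖y - z‖ * ‖dv‖) :=
        mul_le_mul_of_nonneg_right (by linarith) hnn
      nlinarith [this]
    calc abs ((1/2 : ℝ) * ((∑ j : Fin n, u1 j * dv j) + (∑ j : Fin n, u2 j * |dv j|))) ≤
        (1/2) * (|∑ j : Fin n, u1 j * dv j| + abs (∑ j : Fin n, u2 j * |dv j|)) := h5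
      _ ≤ (1/2) * (‖u1‖ * ‖dv‖ + ‖u2‖ * ‖dv‖) := by linarith
      _ ≤ 2 * L i * ‖y - z‖ * ‖dv‖ := by linarith
      _ ≤ (2 * ∑ i : Fin m, L i) * ‖y - z‖ * ‖dv‖ := by
          have := h8; linarith [this]
  unfold psi
  rw [abs_sub_le_iff]
  constructor
  · exact ciSup_sub_le_of_abs m hm _ _ _ key
  · refine ciSup_sub_le_of_abs m hm _ _ _ fun i => ?_
    rw [abs_sub_comm]; exact key i
lemma seq_contra (V D Ψ : ℕ → ℝ) (c δ ε Z : ℝ) (N : ℕ)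
    (hc : 0 < c) (hδ0 : 0 ≤ δ) (hδ1 : δ < 1) (hε : 0 < ε)
    (hV : ∀ k, 0 < V k) (hD : ∀ k, 0 < D k)
    (hΨ : ∀ k, Ψ k ≤ -(c * V k^2))
    (hrec : ∀ k, D (k+1) ≤ V (k+1) + δ * (V (k+1)^2 / V k^2) * D k)
    (hZ : ∀ M : ℕ, ∑ k ∈ Finset.range M, Ψ k^2 / D k^2 ≤ Z)
    (hN : ∀ k, N ≤ k → ε ≤ V k) : False := by
  have h1δ : 0 < 1 - δ := by linarith
  obtain ⟨B, hBdef⟩ : ∃ B : ℝ, B = D N / V N^2 + 1/(ε*(1-δ)) := ⟨_, rfl⟩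
  have hB1 : 0 ≤ D N / V N^2 := div_nonneg (hD N).le (sq_nonneg _)
  have hB2 : 0 < 1/(ε*(1-δ)) := one_div_pos.2 (mul_pos hε h1δ)
  have hBpos : 0 < B := by rw [hBdef]; linarith
  have hBineq : 1/ε + δ * B ≤ B := by
    have e1 : (1-δ) * B = (1-δ) * (D N / V N^2) + 1/ε := by
      rw [hBdef]
      field_simp
    nlinarith [e1, mul_nonneg h1δ.le hB1]
  have hdbd : ∀ k, N ≤ k → D k ≤ B * V k^2 := by
    intro k hk
    induction k, hk using Nat.le_induction with
    | base =>
      rw [hBdef]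
      have e : D N = (D N / V N^2) * V N^2 :=
        (div_mul_cancel₀ _ (pow_pos (hV N) 2).ne').symm
      nlinarith [e, mul_nonneg hB2.le (sq_nonneg (V N))]
    | succ k hk ih =>
      have h5 : δ * (V (k+1)^2 / V k^2) * D k ≤ δ * (V (k+1)^2 / V k^2) * (B * V k^2) :=
        mul_le_mul_of_nonneg_left ih
          (mul_nonneg hδ0 (div_nonneg (sq_nonneg _) (sq_nonneg _)))
      have h6 : δ * (V (k+1)^2 / V k^2) * (B * V k^2) = δ * B * V (k+1)^2 := by
        have hne : V k^2 ≠ 0 := (pow_pos (hV k) 2).ne'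
        have hne' : V k ≠ 0 := (hV k).ne'
        field_simp
      rw [h6] at h5
      have h7 : V (k+1) ≤ V (k+1)^2 / ε := by
        rw [le_div_iff₀ hε]
        nlinarith [hN (k+1) (by omega), hV (k+1)]
      have h8 : V (k+1)^2/ε + δ*B*V (k+1)^2 ≤ B * V (k+1)^2 := by
        have e : V (k+1)^2/ε = (1/ε) * V (k+1)^2 := by ring
        rw [e]
        nlinarith [mul_le_mul_of_nonneg_right hBineq (sq_nonneg (V (k+1)))]
      linarith [hrec k, h5, h7, h8]
  have hterm : ∀ k, N ≤ k → c^2/B^2 ≤ Ψ k^2 / D k^2 := by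
    intro k hk
    have h1 := hΨ k
    have hcv : 0 < c * V k^2 := mul_pos hc (pow_pos (hV k) 2)
    have hΨsq : (c * V k^2)^2 ≤ Ψ k^2 := by
      nlinarith [mul_nonneg (by linarith : (0:ℝ) ≤ -(Ψ k) - c * V k^2)
        (by linarith : (0:ℝ) ≤ -(Ψ k) + c * V k^2)]
    have hd2pos : 0 < D k^2 := pow_pos (hD k) 2
    have hB2pos : 0 < B^2 := pow_pos hBpos 2
    have hd4 : D k^2 ≤ B^2 * (V k^2)^2 := by
      nlinarith [mul_self_le_mul_self (hD k).le (hdbd k hk)]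
    rw [div_le_div_iff₀ hB2pos hd2pos]
    nlinarith [mul_le_mul_of_nonneg_left hd4 (sq_nonneg c),
      mul_le_mul_of_nonneg_left hΨsq (sq_nonneg B)]
  have hηpos : 0 < c^2/B^2 := div_pos (pow_pos hc 2) (pow_pos hBpos 2)
  obtain ⟨K, hK⟩ := exists_nat_gt (Z / (c^2/B^2))
  have hlow : (K : ℝ) * (c^2/B^2) ≤ ∑ k ∈ Finset.Ico N (N+K), Ψ k^2 / D k^2 := by
    calc (K : ℝ) * (c^2/B^2)
        = ∑ _k ∈ Finset.Ico N (N+K), (c^2/B^2) := by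
          rw [Finset.sum_const, Nat.card_Ico]
          simp [Nat.add_sub_cancel_left]
      _ ≤ ∑ k ∈ Finset.Ico N (N+K), Ψ k^2 / D k^2 :=
          Finset.sum_le_sum (fun k hkm => hterm k (Finset.mem_Ico.1 hkm).1)
  have hsplit : ∑ k ∈ Finset.Ico N (N+K), Ψ k^2 / D k^2
      ≤ ∑ k ∈ Finset.range (N+K), Ψ k^2 / D k^2 := by
    apply Finset.sum_le_sum_of_subset_of_nonneg
    · intro a ha
      rw [Finset.mem_range]
      exact (Finset.mem_Ico.1 ha).2
    · intro a _ _
      positivity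
  have hZK := hZ (N+K)
  have hKη : Z < (K : ℝ) * (c^2/B^2) := by
    rw [div_lt_iff₀ hηpos] at hK
    linarith
  linarith
set_option maxHeartbeats 1000000 in
theorem fr_convergence_std_wolfe (m n : ℕ) (hm : 0 < m) (hn : 0 < n)
    (Gl Gu : Fin m → EuclideanSpace ℝ (Fin n) → ℝ)
    (hGl : ∀ i, ContDiff ℝ 1 (Gl i)) (hGu : ∀ i, ContDiff ℝ 1 (Gu i))
    (hle : ∀ (i : Fin m) (x : EuclideanSpace ℝ (Fin n)), Gl i x ≤ Gu i x)
    (vv : EuclideanSpace ℝ (Fin n) → EuclideanSpace ℝ (Fin n))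
    (hvmin : ∀ y w : EuclideanSpace ℝ (Fin n),
      psi m n Gl Gu y (vv y) + (1/2) * ‖vv y‖^2 ≤ psi m n Gl Gu y w + (1/2) * ‖w‖^2)
    (ρ σ : ℝ) (hρ : 0 < ρ) (hρσ : ρ < σ) (hσ : σ < 1)
    (x d : ℕ → EuclideanSpace ℝ (Fin n)) (t : ℕ → ℝ) (β : ℕ → ℝ)
    (hx : ∀ k : ℕ, x (k+1) = x k + t k • d k)
    (ht : ∀ k : ℕ, 0 < t k)
    (hd0 : d 0 = vv (x 0))
    (hdk : ∀ k : ℕ, d (k+1) = vv (x (k+1)) + β (k+1) • d k)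
    (hvne : ∀ k : ℕ, vv (x k) ≠ 0)
    (δ : ℝ) (hδ0 : 0 ≤ δ) (hδ1 : δ < 1)
    (hA1 : AssumptionA1 m n Gl Gu (x 0))
    (hA2 : AssumptionA2 m n Gl Gu (x 0))
    (hβ : ∀ k : ℕ, |β (k+1)| ≤
      δ * (psi m n Gl Gu (x (k+1)) (vv (x (k+1))) / psi m n Gl Gu (x k) (vv (x k))))
    (hc : ∃ c : ℝ, 0 < c ∧ ∀ k : ℕ,
      psi m n Gl Gu (x k) (d k) ≤ c * psi m n Gl Gu (x k) (vv (x k)))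
    (hw : ∀ k : ℕ, StdWolfe m n Gl Gu ρ σ (x k) (d k) (t k)) :
    Filter.liminf (fun k : ℕ => ‖vv (x k)‖) Filter.atTop = 0 := by
  haveI : Nonempty (Fin m) := ⟨⟨0, hm⟩⟩
  obtain ⟨c, hcpos, hcd⟩ := hc
  have hVpos : ∀ k, 0 < ‖vv (x k)‖ := fun k => norm_pos_iff.2 (hvne k)
  have hφ : ∀ k, psi m n Gl Gu (x k) (vv (x k)) = -‖vv (x k)‖^2 :=
    fun k => psi_v_eq m n hm Gl Gu vv hvmin (x k) (hvne k)
  have hΨneg : ∀ k, psi m n Gl Gu (x k) (d k) < 0 := by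
    intro k
    have h1 := hcd k
    rw [hφ k] at h1
    have h2 : 0 < ‖vv (x k)‖^2 := pow_pos (hVpos k) 2
    nlinarith
  have hmono : ∀ k (i : Fin m), Gl i (x (k+1)) ≤ Gl i (x k) ∧ Gu i (x (k+1)) ≤ Gu i (x k) := by
    intro k i
    have h := (hw k).1 i
    rw [← hx k] at h
    have h2 : ρ * t k * psi m n Gl Gu (x k) (d k) ≤ 0 := by
      have h3 := mul_neg_of_pos_of_neg (mul_pos hρ (ht k)) (hΨneg k)
      linarith [h3]
    exact ⟨le_trans h.1 (by linarith), le_trans h.2 (by linarith)⟩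
  have hLS : ∀ k, x k ∈ LevelSet m n Gl Gu (x 0) := by
    intro k
    induction k with
    | zero => intro i; exact ⟨le_refl _, le_refl _⟩
    | succ k ih => intro i; exact ⟨le_trans (hmono k i).1 (ih i).1, le_trans (hmono k i).2 (ih i).2⟩
  obtain ⟨⟨Cl, hCl⟩, -⟩ := hA2 x hLS (fun i k => hmono k i) ⟨0, hm⟩
  have htel : ∀ N : ℕ, Gl ⟨0, hm⟩ (x N) ≤ Gl ⟨0, hm⟩ (x 0) +
      ρ * ∑ k ∈ Finset.range N, t k * psi m n Gl Gu (x k) (d k) := by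
    intro N
    induction N with
    | zero => simp
    | succ N ihN =>
      have h := ((hw N).1 ⟨0, hm⟩).1
      rw [← hx N] at h
      rw [Finset.sum_range_succ, mul_add]
      have : ρ * t N * psi m n Gl Gu (x N) (d N) = ρ * (t N * psi m n Gl Gu (x N) (d N)) := by ring
      linarith [h, ihN]
  have hsum1 : ∀ N : ℕ, ∑ k ∈ Finset.range N, t k * (-(psi m n Gl Gu (x k) (d k)))
      ≤ (Gl ⟨0, hm⟩ (x 0) - Cl) / ρ := by
    intro N
    rw [le_div_iff₀ hρ]
    have h1 := htel N
    have h2 := hCl N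
    have e : ∑ k ∈ Finset.range N, t k * (-(psi m n Gl Gu (x k) (d k)))
        = -∑ k ∈ Finset.range N, t k * psi m n Gl Gu (x k) (d k) := by
      rw [← Finset.sum_neg_distrib]
      apply Finset.sum_congr rfl; intro j _; ring
    rw [e]
    nlinarith [h1, h2]
  obtain ⟨L, hLpos, hLip⟩ := psi_lip m n hm Gl Gu (x 0) hA1
  have hdne : ∀ k, d k ≠ 0 := by
    intro k hdk0
    have h := hΨneg k
    rw [hdk0, psi_zero m n hm] at h
    exact lt_irrefl _ h
  have h1σ : 0 < 1 - σ := by linarith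
  have hZou : ∀ k : ℕ, (psi m n Gl Gu (x k) (d k))^2 / ‖d k‖^2
      ≤ (L / (1-σ)) * (t k * (-(psi m n Gl Gu (x k) (d k)))) := by
    intro k
    have hW2 := (hw k).2
    rw [← hx k] at hW2
    have hlip := hLip (x (k+1)) (hLS (k+1)) (x k) (hLS k) (d k)
    have hxx : ‖x (k+1) - x k‖ = t k * ‖d k‖ := by
      rw [hx k]
      have : x k + t k • d k - x k = t k • d k := by abel
      rw [this, norm_smul, Real.norm_eq_abs, abs_of_pos (ht k)]
    rw [hxx] at hlip
    have hup : psi m n Gl Gu (x (k+1)) (d k) - psi m n Gl Gu (x k) (d k)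
        ≤ L * (t k * ‖d k‖) * ‖d k‖ := by
      have := (abs_sub_le_iff.1 hlip).1
      linarith
    have h3 : (1-σ) * (-(psi m n Gl Gu (x k) (d k))) ≤ L * t k * ‖d k‖^2 := by
      nlinarith [hW2, hup]
    have hdn : 0 < ‖d k‖ := norm_pos_iff.2 (hdne k)
    have hd2 : 0 < ‖d k‖^2 := pow_pos hdn 2
    rw [div_le_iff₀ hd2]
    have h4 : -(psi m n Gl Gu (x k) (d k)) ≤ (L / (1-σ)) * (t k * ‖d k‖^2) := by
      rw [div_mul_eq_mul_div, le_div_iff₀ h1σ]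
      nlinarith [h3]
    have h5 := mul_le_mul_of_nonneg_right h4 (le_of_lt (neg_pos.2 (hΨneg k)))
    calc (psi m n Gl Gu (x k) (d k))^2
        = (-(psi m n Gl Gu (x k) (d k))) * (-(psi m n Gl Gu (x k) (d k))) := by ring
      _ ≤ (L / (1-σ)) * (t k * ‖d k‖^2) * (-(psi m n Gl Gu (x k) (d k))) := h5
      _ = L / (1-σ) * (t k * -psi m n Gl Gu (x k) (d k)) * ‖d k‖^2 := by ring
  have hZsum : ∀ N : ℕ, ∑ k ∈ Finset.range N, (psi m n Gl Gu (x k) (d k))^2 / ‖d k‖^2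
      ≤ (L / (1-σ)) * ((Gl ⟨0, hm⟩ (x 0) - Cl) / ρ) := by
    intro N
    have hLσ : 0 ≤ L / (1-σ) := le_of_lt (div_pos hLpos h1σ)
    calc ∑ k ∈ Finset.range N, (psi m n Gl Gu (x k) (d k))^2 / ‖d k‖^2
        ≤ ∑ k ∈ Finset.range N, (L / (1-σ)) * (t k * (-(psi m n Gl Gu (x k) (d k)))) :=
          Finset.sum_le_sum (fun k _ => hZou k)
      _ = (L / (1-σ)) * ∑ k ∈ Finset.range N, t k * (-(psi m n Gl Gu (x k) (d k))) :=
          (Finset.mul_sum _ _ _).symm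
      _ ≤ (L / (1-σ)) * ((Gl ⟨0, hm⟩ (x 0) - Cl) / ρ) :=
          mul_le_mul_of_nonneg_left (hsum1 N) hLσ
  -- the key frequency claim
  have hfreq : ∀ ε : ℝ, 0 < ε → ∀ N : ℕ, ∃ k, N ≤ k ∧ ‖vv (x k)‖ < ε := by
    by_contra hcon
    push_neg at hcon
    obtain ⟨ε, hε, N, hN⟩ := hcon
    have hDpos : ∀ k, 0 < ‖d k‖ := fun k => norm_pos_iff.2 (hdne k)
    have hΨub : ∀ k, psi m n Gl Gu (x k) (d k) ≤ -(c * ‖vv (x k)‖^2) := by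
      intro k
      have h := hcd k
      rw [hφ k] at h
      linarith
    have hrec : ∀ k, ‖d (k+1)‖ ≤ ‖vv (x (k+1))‖ +
        δ * (‖vv (x (k+1))‖^2 / ‖vv (x k)‖^2) * ‖d k‖ := by
      intro k
      have htri : ‖d (k+1)‖ ≤ ‖vv (x (k+1))‖ + |β (k+1)| * ‖d k‖ := by
        rw [hdk k]
        calc ‖vv (x (k+1)) + β (k+1) • d k‖
            ≤ ‖vv (x (k+1))‖ + ‖β (k+1) • d k‖ := norm_add_le _ _
          _ = ‖vv (x (k+1))‖ + |β (k+1)| * ‖d k‖ := by rw [norm_smul, Real.norm_eq_abs]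
      have hβ' : |β (k+1)| ≤ δ * (‖vv (x (k+1))‖^2 / ‖vv (x k)‖^2) := by
        have h := hβ k
        rw [hφ k, hφ (k+1), neg_div_neg_eq] at h
        exact h
      have h2 := mul_le_mul_of_nonneg_right hβ' (norm_nonneg (d k))
      linarith [htri, h2]
    exact seq_contra (fun k => ‖vv (x k)‖) (fun k => ‖d k‖)
      (fun k => psi m n Gl Gu (x k) (d k)) c δ ε
      ((L / (1-σ)) * ((Gl ⟨0, hm⟩ (x 0) - Cl) / ρ)) N
      hcpos hδ0 hδ1 hε hVpos hDpos hΨub hrec hZsum hN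
  -- conclude about the liminf
  rw [Filter.liminf_eq]
  have h0mem : (0 : ℝ) ∈ {a : ℝ | ∀ᶠ k in Filter.atTop, a ≤ ‖vv (x k)‖} :=
    Filter.Eventually.of_forall (fun k => norm_nonneg _)
  have hub : ∀ a ∈ {a : ℝ | ∀ᶠ k in Filter.atTop, a ≤ ‖vv (x k)‖}, a ≤ 0 := by
    intro a ha
    by_contra hlt
    push_neg at hlt
    obtain ⟨N, hN⟩ := Filter.eventually_atTop.1 ha
    obtain ⟨k, hk1, hk2⟩ := hfreq a hlt N
    exact absurd (hN k hk1) (not_le.2 hk2)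
  exact le_antisymm (csSup_le ⟨0, h0mem⟩ hub) (le_csSup ⟨0, hub⟩ h0mem)
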